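/- The block-diagonal gain K = diag(K_1,…,K_N) is a stationary point of f(K) = Tr E[Q_uu (K(Cx+v) - Lx)(K(Cx+v) - Lx)ᵀ] if and only if for each i = 1,…,N: Σ_{j=1}^N [Q_uu]_{ij} K_j (C_j V_xx C_iᵀ + [V_vv]_{ji}) = -[Q_ux]_i V_xx C_iᵀ, where Q_uu L = -Q_ux. -/

import Mathlib

set_option linter.unusedSectionVars false
open Matrix MeasureTheory ProbabilityTheory

section Aux
variable {Ω : Type*} [MeasurableSpace Ω] {P : Measure Ω} [IsProbabilityMeasure P]

lemma auxIntMul {f g : Ω → ℝ} (hf : MemLp f 2 P) (hg : MemLp g 2 P) :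
    Integrable (fun ω => f ω * g ω) P := by
  rw [← memLp_one_iff_integrable]
  exact (hg.smul hf (hpqr := ⟨by simp [one_div, ENNReal.inv_two_add_inv_two]⟩) : MemLp (f • g) 1 P)

lemma auxComp {ι : Type*} [Fintype ι] {x : Ω → ι → ℝ} (hx2 : MemLp x 2 P) (k : ι) :
    MemLp (fun ω => x ω k) 2 P :=
  (ContinuousLinearMap.proj (R := ℝ) (φ := fun _ : ι => ℝ) k).comp_memLp' hx2

variable {ι : Type*} [Fintype ι] {z : Ω → ι → ℝ}

lemma auxMemMulVec (hz : ∀ i, MemLp (fun ω => z ω i) 2 P)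
    {α : Type*} (S : Matrix α ι ℝ) (s : α) :
    MemLp (fun ω => (S *ᵥ z ω) s) 2 P := by
  have : (fun ω => (S *ᵥ z ω) s) = fun ω => ∑ i, S s i * z ω i := by
    funext ω; simp [mulVec, dotProduct]
  rw [this]
  exact memLp_finset_sum _ (fun i _ => ((hz i).const_mul (S s i)))

lemma auxCov (hz : ∀ i, MemLp (fun ω => z ω i) 2 P)
    {V : Matrix ι ι ℝ} (hV : ∀ i j, ∫ ω, z ω i * z ω j ∂P = V i j)
    {α β : Type*} [Fintype α] [Fintype β] (S : Matrix α ι ℝ) (T : Matrix β ι ℝ)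
    (s : α) (r : β) :
    ∫ ω, (S *ᵥ z ω) s * (T *ᵥ z ω) r ∂P = (S * V * Tᵀ) s r := by
  have h1 : (fun ω => (S *ᵥ z ω) s * (T *ᵥ z ω) r)
      = fun ω => ∑ i, ∑ j, S s i * T r j * (z ω i * z ω j) := by
    funext ω
    simp only [mulVec, dotProduct, Finset.sum_mul_sum]
    exact Finset.sum_congr rfl fun i _ => Finset.sum_congr rfl fun j _ => by ring
  rw [h1, integral_finset_sum _ (fun i _ => integrable_finset_sum _
      (fun j _ => ((auxIntMul (hz i) (hz j)).const_mul _)))]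
  have h2 : ∀ i, ∫ ω, ∑ j, S s i * T r j * (z ω i * z ω j) ∂P
      = ∑ j, S s i * T r j * V i j := by
    intro i
    rw [integral_finset_sum _ (fun j _ => ((auxIntMul (hz i) (hz j)).const_mul _))]
    exact Finset.sum_congr rfl fun j _ => by rw [integral_const_mul, hV]
  simp_rw [h2]
  simp only [Matrix.mul_apply, Matrix.transpose_apply, Finset.sum_mul]
  rw [Finset.sum_comm]
  exact Finset.sum_congr rfl fun i _ => Finset.sum_congr rfl fun j _ => by ring

end Aux

section Aux2
variable {Ω : Type*} [MeasurableSpace Ω] {P : Measure Ω} [IsProbabilityMeasure P]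
variable {ι : Type*} [Fintype ι] {z : Ω → ι → ℝ}
variable {σ : Type*} [Fintype σ]

lemma auxFint (hz : ∀ i, MemLp (fun ω => z ω i) 2 P)
    (Q : Matrix σ σ ℝ) (S T : Matrix σ ι ℝ) :
    Integrable (fun ω => ∑ r, ∑ s, Q r s * ((S *ᵥ z ω) s * (T *ᵥ z ω) r)) P :=
  integrable_finset_sum _ (fun r _ => integrable_finset_sum _
    (fun s _ => ((auxIntMul (auxMemMulVec hz S s) (auxMemMulVec hz T r)).const_mul _)))

lemma auxFval (hz : ∀ i, MemLp (fun ω => z ω i) 2 P)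
    {V : Matrix ι ι ℝ} (hV : ∀ i j, ∫ ω, z ω i * z ω j ∂P = V i j)
    (Q : Matrix σ σ ℝ) (S T : Matrix σ ι ℝ) :
    ∫ ω, ∑ r, ∑ s, Q r s * ((S *ᵥ z ω) s * (T *ᵥ z ω) r) ∂P
      = (Q * (S * V * Tᵀ)).trace := by
  rw [integral_finset_sum _ (fun r _ => integrable_finset_sum _
    (fun s _ => ((auxIntMul (auxMemMulVec hz S s) (auxMemMulVec hz T r)).const_mul (Q r s))))]
  have h1 : ∀ r, ∫ ω, ∑ s, Q r s * ((S *ᵥ z ω) s * (T *ᵥ z ω) r) ∂P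
      = ∑ s, Q r s * (S * V * Tᵀ) s r := by
    intro r
    rw [integral_finset_sum _
      (fun s _ => ((auxIntMul (auxMemMulVec hz S s) (auxMemMulVec hz T r)).const_mul (Q r s)))]
    exact Finset.sum_congr rfl fun s _ => by rw [integral_const_mul, auxCov hz hV]
  simp_rw [h1]
  simp [Matrix.trace, Matrix.diag, Matrix.mul_apply]

lemma auxPoly (hz : ∀ i, MemLp (fun ω => z ω i) 2 P)
    {V : Matrix ι ι ℝ} (hV : ∀ i j, ∫ ω, z ω i * z ω j ∂P = V i j)
    (Q : Matrix σ σ ℝ) (S T : Matrix σ ι ℝ) (t : ℝ) :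
    ∫ ω, (Q * vecMulVec (S *ᵥ z ω + t • (T *ᵥ z ω)) (S *ᵥ z ω + t • (T *ᵥ z ω))).trace ∂P
      = (Q * (S * V * Sᵀ)).trace
        + (t * ((Q * (S * V * Tᵀ)).trace + (Q * (T * V * Sᵀ)).trace)
          + t ^ 2 * (Q * (T * V * Tᵀ)).trace) := by
  have hT : ∀ w : σ → ℝ, (Q * vecMulVec w w).trace = ∑ r, ∑ s, Q r s * (w s * w r) := by
    intro w; simp [Matrix.trace, Matrix.diag, Matrix.mul_apply, Matrix.vecMulVec_apply]
  have hpt : (fun ω => (Q * vecMulVec (S *ᵥ z ω + t • (T *ᵥ z ω))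
        (S *ᵥ z ω + t • (T *ᵥ z ω))).trace)
      = fun ω => (∑ r, ∑ s, Q r s * ((S *ᵥ z ω) s * (S *ᵥ z ω) r))
        + (t * ((∑ r, ∑ s, Q r s * ((S *ᵥ z ω) s * (T *ᵥ z ω) r))
             + (∑ r, ∑ s, Q r s * ((T *ᵥ z ω) s * (S *ᵥ z ω) r)))
          + t ^ 2 * (∑ r, ∑ s, Q r s * ((T *ᵥ z ω) s * (T *ᵥ z ω) r))) := by
    funext ω
    rw [hT]
    simp only [mul_add, Finset.mul_sum, ← Finset.sum_add_distrib]
    refine Finset.sum_congr rfl fun r _ => Finset.sum_congr rfl fun s _ => ?_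
    simp only [Pi.add_apply, Pi.smul_apply, smul_eq_mul]
    ring
  rw [hpt]
  have hSS := auxFint (P := P) hz Q S S
  have hST := auxFint (P := P) hz Q S T
  have hTS := auxFint (P := P) hz Q T S
  have hTT := auxFint (P := P) hz Q T T
  have h2 : Integrable (fun ω => t * ((∑ r, ∑ s, Q r s * ((S *ᵥ z ω) s * (T *ᵥ z ω) r))
             + (∑ r, ∑ s, Q r s * ((T *ᵥ z ω) s * (S *ᵥ z ω) r)))
          + t ^ 2 * (∑ r, ∑ s, Q r s * ((T *ᵥ z ω) s * (T *ᵥ z ω) r))) P := by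
    exact ((hST.add hTS).const_mul t).add (hTT.const_mul (t ^ 2))
  have h3 : Integrable (fun ω => (∑ r, ∑ s, Q r s * ((S *ᵥ z ω) s * (T *ᵥ z ω) r))
             + (∑ r, ∑ s, Q r s * ((T *ᵥ z ω) s * (S *ᵥ z ω) r))) P := by
    exact hST.add hTS
  rw [integral_add hSS h2, integral_add (h3.const_mul t) (hTT.const_mul (t ^ 2)),
    integral_const_mul, integral_const_mul, integral_add hST hTS,
    auxFval hz hV, auxFval hz hV, auxFval hz hV, auxFval hz hV]

end Aux2

section Aux3
variable {N : ℕ} {m p : Fin N → ℕ}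

lemma auxPair (G : Matrix ((i : Fin N) × Fin (m i)) ((j : Fin N) × Fin (p j)) ℝ)
    (D : (i : Fin N) → Matrix (Fin (m i)) (Fin (p i)) ℝ) :
    ∑ r : (i : Fin N) × Fin (m i), ∑ c : (j : Fin N) × Fin (p j),
        G r c * blockDiagonal' D r c
      = ∑ i : Fin N, ∑ a : Fin (m i), ∑ b : Fin (p i), G ⟨i, a⟩ ⟨i, b⟩ * D i a b := by
  rw [← Finset.univ_sigma_univ, Finset.sum_sigma]
  refine Finset.sum_congr rfl fun i _ => Finset.sum_congr rfl fun a _ => ?_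
  rw [← Finset.univ_sigma_univ, Finset.sum_sigma]
  rw [Finset.sum_eq_single i]
  · exact Finset.sum_congr rfl fun b _ => by rw [blockDiagonal'_apply_eq]
  · intro j _ hj
    refine Finset.sum_eq_zero fun b _ => ?_
    rw [blockDiagonal'_apply_ne _ _ _ (Ne.symm hj), mul_zero]
  · intro h; exact absurd (Finset.mem_univ i) h

lemma auxSingle (G : Matrix ((i : Fin N) × Fin (m i)) ((j : Fin N) × Fin (p j)) ℝ)
    (i : Fin N) (a : Fin (m i)) (b : Fin (p i)) :
    ∑ i' : Fin N, ∑ a' : Fin (m i'), ∑ b' : Fin (p i'),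
        G ⟨i', a'⟩ ⟨i', b'⟩ * (Pi.single (M := fun i => Matrix (Fin (m i)) (Fin (p i)) ℝ) i (Matrix.single a b (1 : ℝ)) i') a' b'
      = G ⟨i, a⟩ ⟨i, b⟩ := by
  rw [Finset.sum_eq_single i]
  · rw [Pi.single_eq_same]
    rw [Finset.sum_eq_single a]
    · rw [Finset.sum_eq_single b]
      · simp [Matrix.single]
      · intro b' _ hb; simp [Matrix.single, Ne.symm hb]
      · intro h; exact absurd (Finset.mem_univ b) h
    · intro a' _ ha
      refine Finset.sum_eq_zero fun b' _ => ?_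
      simp [Matrix.single, Ne.symm ha]
    · intro h; exact absurd (Finset.mem_univ a) h
  · intro j _ hj
    rw [Pi.single_eq_of_ne hj]
    simp
  · intro h; exact absurd (Finset.mem_univ i) h

lemma auxBlockEntry {β : Type*} [Fintype β]
    (Q : Matrix ((i : Fin N) × Fin (m i)) ((i : Fin N) × Fin (m i)) ℝ)
    (K : (i : Fin N) → Matrix (Fin (m i)) (Fin (p i)) ℝ)
    (X : Matrix ((j : Fin N) × Fin (p j)) β ℝ) (i : Fin N) (a : Fin (m i)) (c : β) :
    (Q * blockDiagonal' K * X) ⟨i, a⟩ c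
      = ∑ j : Fin N,
          (Q.submatrix (Sigma.mk i) (Sigma.mk j) * (K j * X.submatrix (Sigma.mk j) id)) a c := by
  rw [Matrix.mul_assoc]
  have hBX : ∀ (j : Fin N) (a' : Fin (m j)),
      (blockDiagonal' K * X) ⟨j, a'⟩ c = (K j * X.submatrix (Sigma.mk j) id) a' c := by
    intro j a'
    rw [Matrix.mul_apply, ← Finset.univ_sigma_univ, Finset.sum_sigma]
    rw [Finset.sum_eq_single j]
    · rw [Matrix.mul_apply]
      exact Finset.sum_congr rfl fun b' _ => by rw [blockDiagonal'_apply_eq]; rfl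
    · intro j' _ hj'
      refine Finset.sum_eq_zero fun b' _ => ?_
      rw [blockDiagonal'_apply_ne _ _ _ (Ne.symm hj'), zero_mul]
    · intro h; exact absurd (Finset.mem_univ j) h
  rw [Matrix.mul_apply, ← Finset.univ_sigma_univ, Finset.sum_sigma]
  refine Finset.sum_congr rfl fun j _ => ?_
  rw [Matrix.mul_apply]
  exact Finset.sum_congr rfl fun a' _ => by rw [hBX j a']; rfl

end Aux3


/-- Stationarity condition for the optimal linear team decision.  With
`K = diag(K_1, …, K_N)` (block-diagonal), `C` stacked from the `C_i`, and
`f(K) = Tr E[Quu (K(Cx+v) - Lx)(K(Cx+v) - Lx)ᵀ]`, the gain `K` is a stationary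
point of `f` (all directional derivatives over block-diagonal perturbations
vanish) iff for each `i`:
`Σ_j [Quu]_{ij} K_j (C_j Vxx C_iᵀ + [Vvv]_{ji}) = -[Qux]_i Vxx C_iᵀ`,
where `Quu L = -Qux`. -/
theorem stmt8 {N n : ℕ} {m p : Fin N → ℕ} {Ω : Type*} [MeasurableSpace Ω]
    (P : Measure Ω) [IsProbabilityMeasure P]
    (x : Ω → Fin n → ℝ) (v : Ω → (j : Fin N) × Fin (p j) → ℝ)
    (hx : Measurable x) (hv : Measurable v)
    (hindep : IndepFun x v P)
    (hx2 : MemLp x 2 P) (hv2 : MemLp v 2 P)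
    (hxmean : ∀ i, ∫ ω, x ω i ∂P = 0) (hvmean : ∀ i, ∫ ω, v ω i ∂P = 0)
    (Vxx : Matrix (Fin n) (Fin n) ℝ)
    (Vvv : Matrix ((j : Fin N) × Fin (p j)) ((j : Fin N) × Fin (p j)) ℝ)
    (hVxxsym : Vxxᵀ = Vxx) (hVvvsym : Vvvᵀ = Vvv)
    (hVxx : ∀ i j, ∫ ω, x ω i * x ω j ∂P = Vxx i j)
    (hVvv : ∀ i j, ∫ ω, v ω i * v ω j ∂P = Vvv i j)
    (Quu : Matrix ((i : Fin N) × Fin (m i)) ((i : Fin N) × Fin (m i)) ℝ)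
    (hQuu : Quu.PosDef)
    (L : Matrix ((i : Fin N) × Fin (m i)) (Fin n) ℝ)
    (Qux : Matrix ((i : Fin N) × Fin (m i)) (Fin n) ℝ)
    (hL : Quu * L = -Qux)
    (Cb : (i : Fin N) → Matrix (Fin (p i)) (Fin n) ℝ)
    (K : (i : Fin N) → Matrix (Fin (m i)) (Fin (p i)) ℝ) :
    -- f evaluated on a block-diagonal gain:
    (let C : Matrix ((j : Fin N) × Fin (p j)) (Fin n) ℝ := fun jb k => Cb jb.1 jb.2 k;
     let f : ((i : Fin N) → Matrix (Fin (m i)) (Fin (p i)) ℝ) → ℝ := fun K' =>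
       ∫ ω, (Quu * vecMulVec
          (blockDiagonal' K' *ᵥ (C *ᵥ x ω + v ω) - L *ᵥ x ω)
          (blockDiagonal' K' *ᵥ (C *ᵥ x ω + v ω) - L *ᵥ x ω)).trace ∂P;
     -- stationarity: every directional derivative vanishes
     (∀ D : (i : Fin N) → Matrix (Fin (m i)) (Fin (p i)) ℝ,
        deriv (fun t : ℝ => f (fun i => K i + t • D i)) 0 = 0) ↔
     -- the linear system of equations
     (∀ i : Fin N,
        (∑ j : Fin N,
          (Quu.submatrix (Sigma.mk i) (Sigma.mk j)) * K j *
            (Cb j * Vxx * (Cb i)ᵀ +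
              Vvv.submatrix (Sigma.mk j) (Sigma.mk i))) =
        -((Qux.submatrix (Sigma.mk i) id) * Vxx * (Cb i)ᵀ))) := by
  dsimp only
  -- notation
  set Cm : Matrix ((j : Fin N) × Fin (p j)) (Fin n) ℝ := fun jb k => Cb jb.1 jb.2 k with hCm
  obtain ⟨Vb, hVb⟩ : ∃ W, W = Matrix.fromBlocks Vxx 0 0 Vvv := ⟨_, rfl⟩
  obtain ⟨W0, hW0⟩ : ∃ W, W = Matrix.fromCols (blockDiagonal' K * Cm - L) (blockDiagonal' K)
    := ⟨_, rfl⟩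
  obtain ⟨UU, hUU⟩ : ∃ W : ((i : Fin N) → Matrix (Fin (m i)) (Fin (p i)) ℝ) →
      Matrix ((i : Fin N) × Fin (m i)) (Fin n ⊕ ((j : Fin N) × Fin (p j))) ℝ,
      W = fun D' => Matrix.fromCols (blockDiagonal' D' * Cm) (blockDiagonal' D') := ⟨_, rfl⟩
  obtain ⟨Gm, hGm⟩ : ∃ W, W = Quu * blockDiagonal' K * (Cm * Vxx * Cmᵀ + Vvv)
      + Qux * Vxx * Cmᵀ := ⟨_, rfl⟩
  -- the underlying L² vector
  have hz : ∀ i : Fin n ⊕ ((j : Fin N) × Fin (p j)),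
      MemLp (fun ω => Sum.elim (x ω) (v ω) i) 2 P := by
    rintro (k | l)
    · exact auxComp hx2 k
    · exact auxComp hv2 l
  have hxv : ∀ k l, ∫ ω, x ω k * v ω l ∂P = 0 := by
    intro k l
    have hik : IndepFun (fun ω => x ω k) (fun ω => v ω l) P :=
      hindep.comp (measurable_pi_apply k) (measurable_pi_apply l)
    have h5 := hik.integral_mul_eq_mul_integral ((auxComp hx2 k).integrable one_le_two).aestronglyMeasurable
        ((auxComp hv2 l).integrable one_le_two).aestronglyMeasurable
    have h6 : (fun ω => x ω k * v ω l) = ((fun ω => x ω k) * fun ω => v ω l) := rfl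
    rw [h6, h5, hxmean, zero_mul]
  have hVz : ∀ i j, ∫ ω, Sum.elim (x ω) (v ω) i * Sum.elim (x ω) (v ω) j ∂P = Vb i j := by
    rw [hVb]
    rintro (k | l) (k' | l')
    · simpa using hVxx k k'
    · simpa using hxv k l'
    · have : ∫ ω, v ω l * x ω k' ∂P = ∫ ω, x ω k' * v ω l ∂P := by
        congr 1; funext ω; ring
      simpa [this] using hxv k' l
    · simpa using hVvv l l'
  -- vector decomposition
  have hvec : ∀ (D' : (i : Fin N) → Matrix (Fin (m i)) (Fin (p i)) ℝ) (t : ℝ) (ω : Ω),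
      blockDiagonal' (fun i => K i + t • D' i) *ᵥ (Cm *ᵥ x ω + v ω) - L *ᵥ x ω
        = W0 *ᵥ Sum.elim (x ω) (v ω) + t • (UU D' *ᵥ Sum.elim (x ω) (v ω)) := by
    intro D' t ω
    have h1 : (fun i => K i + t • D' i) = (K + t • D') := rfl
    rw [h1, blockDiagonal'_add, blockDiagonal'_smul, hW0, hUU]
    simp only [Matrix.fromCols_mulVec_sumElim, Matrix.add_mulVec, Matrix.sub_mulVec,
      Matrix.mulVec_add, Matrix.mulVec_mulVec, Matrix.smul_mulVec, smul_add,
      Matrix.add_mul, Matrix.smul_mul]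
    abel
  -- the quadratic expansion of f along the line K + t D
  have hg : ∀ (D' : (i : Fin N) → Matrix (Fin (m i)) (Fin (p i)) ℝ) (t : ℝ),
      (∫ ω, (Quu * vecMulVec
          (blockDiagonal' (fun i => K i + t • D' i) *ᵥ (Cm *ᵥ x ω + v ω) - L *ᵥ x ω)
          (blockDiagonal' (fun i => K i + t • D' i) *ᵥ (Cm *ᵥ x ω + v ω) - L *ᵥ x ω)).trace ∂P)
        = (Quu * (W0 * Vb * W0ᵀ)).trace
          + (t * ((Quu * (W0 * Vb * (UU D')ᵀ)).trace + (Quu * (UU D' * Vb * W0ᵀ)).trace)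
            + t ^ 2 * (Quu * (UU D' * Vb * (UU D')ᵀ)).trace) := by
    intro D' t
    have h2 : (fun ω => (Quu * vecMulVec
          (blockDiagonal' (fun i => K i + t • D' i) *ᵥ (Cm *ᵥ x ω + v ω) - L *ᵥ x ω)
          (blockDiagonal' (fun i => K i + t • D' i) *ᵥ (Cm *ᵥ x ω + v ω) - L *ᵥ x ω)).trace)
        = fun ω => (Quu * vecMulVec
          (W0 *ᵥ Sum.elim (x ω) (v ω) + t • (UU D' *ᵥ Sum.elim (x ω) (v ω)))
          (W0 *ᵥ Sum.elim (x ω) (v ω) + t • (UU D' *ᵥ Sum.elim (x ω) (v ω)))).trace := by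
      funext ω; rw [hvec D' t ω]
    rw [h2]
    exact auxPoly hz hVz Quu W0 (UU D') t
  -- symmetry facts
  have hQs : Quuᵀ = Quu := by
    have h := hQuu.1
    ext i j
    conv_rhs => rw [← h]
    simp [Matrix.conjTranspose_apply]
  have hVs : Vbᵀ = Vb := by
    rw [hVb, Matrix.fromBlocks_transpose, Matrix.transpose_zero, Matrix.transpose_zero,
      hVxxsym, hVvvsym]
  have hsymE : ∀ D', (Quu * (UU D' * Vb * W0ᵀ)).trace = (Quu * (W0 * Vb * (UU D')ᵀ)).trace := by
    intro D'
    have h3 : (Quu * (UU D' * Vb * W0ᵀ))ᵀ = W0 * Vb * (UU D')ᵀ * Quu := by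
      simp [Matrix.transpose_mul, Matrix.mul_assoc, hQs, hVs]
    rw [← Matrix.trace_transpose (Quu * (UU D' * Vb * W0ᵀ)), h3, Matrix.trace_mul_comm]
  -- product expansion: the gradient matrix
  have hprod : ∀ D', Quu * (W0 * Vb * (UU D')ᵀ) = Gm * (blockDiagonal' D')ᵀ := by
    intro D'
    have hW0V : W0 * Vb = Matrix.fromCols ((blockDiagonal' K * Cm - L) * Vxx)
        (blockDiagonal' K * Vvv) := by
      rw [hW0, hVb, Matrix.fromCols_mul_fromBlocks]
      simp
    have hUT : (UU D')ᵀ = Matrix.fromRows (Cmᵀ * (blockDiagonal' D')ᵀ) (blockDiagonal' D')ᵀ := by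
      rw [hUU]
      simp [Matrix.transpose_fromCols, Matrix.transpose_mul]
    rw [Matrix.mul_assoc W0 Vb, ← Matrix.mul_assoc W0 Vb ((UU D')ᵀ), hW0V, hUT,
      Matrix.fromCols_mul_fromRows, hGm]
    have hquL : Quu * (L * (Vxx * (Cmᵀ * (blockDiagonal' D')ᵀ)))
        = -(Qux * (Vxx * (Cmᵀ * (blockDiagonal' D')ᵀ))) := by
      rw [← Matrix.mul_assoc, hL, Matrix.neg_mul]
    simp only [Matrix.mul_add, Matrix.add_mul, Matrix.sub_mul, Matrix.mul_sub,
      Matrix.mul_assoc]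
    rw [hquL]
    abel
  -- the trace pairing
  have htrp : ∀ D' : (i : Fin N) → Matrix (Fin (m i)) (Fin (p i)) ℝ, (Gm * (blockDiagonal' D')ᵀ).trace
      = ∑ i, ∑ a, ∑ b, Gm ⟨i, a⟩ ⟨i, b⟩ * D' i a b := by
    intro D'
    have h4 : (Gm * (blockDiagonal' D')ᵀ).trace
        = ∑ r, ∑ c, Gm r c * blockDiagonal' D' r c := by
      simp only [Matrix.trace, Matrix.diag_apply, Matrix.mul_apply, Matrix.transpose_apply]
    rw [h4, auxPair]
  -- the directional derivative
  have hderiv : ∀ D' : (i : Fin N) → Matrix (Fin (m i)) (Fin (p i)) ℝ,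
      deriv (fun t : ℝ => ∫ ω, (Quu * vecMulVec
          (blockDiagonal' (fun i => K i + t • D' i) *ᵥ (Cm *ᵥ x ω + v ω) - L *ᵥ x ω)
          (blockDiagonal' (fun i => K i + t • D' i) *ᵥ (Cm *ᵥ x ω + v ω) - L *ᵥ x ω)).trace ∂P) 0
        = 2 * ∑ i, ∑ a, ∑ b, Gm ⟨i, a⟩ ⟨i, b⟩ * D' i a b := by
    intro D'
    have hfun : (fun t : ℝ => ∫ ω, (Quu * vecMulVec
          (blockDiagonal' (fun i => K i + t • D' i) *ᵥ (Cm *ᵥ x ω + v ω) - L *ᵥ x ω)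
          (blockDiagonal' (fun i => K i + t • D' i) *ᵥ (Cm *ᵥ x ω + v ω) - L *ᵥ x ω)).trace ∂P)
        = fun t : ℝ => (Quu * (W0 * Vb * W0ᵀ)).trace
          + (t * ((Quu * (W0 * Vb * (UU D')ᵀ)).trace + (Quu * (UU D' * Vb * W0ᵀ)).trace)
            + t ^ 2 * (Quu * (UU D' * Vb * (UU D')ᵀ)).trace) := funext fun t => hg D' t
    rw [hfun]
    have ha : HasDerivAt (fun t : ℝ => t * ((Quu * (W0 * Vb * (UU D')ᵀ)).trace
        + (Quu * (UU D' * Vb * W0ᵀ)).trace))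
        ((Quu * (W0 * Vb * (UU D')ᵀ)).trace + (Quu * (UU D' * Vb * W0ᵀ)).trace) 0 := by
      simpa using (hasDerivAt_id (0 : ℝ)).mul_const
        ((Quu * (W0 * Vb * (UU D')ᵀ)).trace + (Quu * (UU D' * Vb * W0ᵀ)).trace)
    have hb : HasDerivAt (fun t : ℝ => t ^ 2 * (Quu * (UU D' * Vb * (UU D')ᵀ)).trace) 0 0 := by
      simpa using (hasDerivAt_pow 2 (0 : ℝ)).mul_const (Quu * (UU D' * Vb * (UU D')ᵀ)).trace
    have hd := ((ha.add hb).const_add (Quu * (W0 * Vb * W0ᵀ)).trace)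
    erw [hd.deriv]
    rw [hsymE D', ← two_mul, hprod D', htrp D']
    ring
  -- the block entry formula for the gradient
  have hGb : ∀ (i : Fin N) (a : Fin (m i)) (b : Fin (p i)),
      Gm ⟨i, a⟩ ⟨i, b⟩
        = ((∑ j, Quu.submatrix (Sigma.mk i) (Sigma.mk j) * K j *
              (Cb j * Vxx * (Cb i)ᵀ + Vvv.submatrix (Sigma.mk j) (Sigma.mk i)))
            + Qux.submatrix (Sigma.mk i) id * Vxx * (Cb i)ᵀ) a b := by
    intro i a b
    rw [hGm, Matrix.add_apply, Matrix.add_apply]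
    have hpart2 : (Qux * Vxx * Cmᵀ) ⟨i, a⟩ ⟨i, b⟩
        = (Qux.submatrix (Sigma.mk i) id * Vxx * (Cb i)ᵀ) a b := by
      simp [Matrix.mul_apply, hCm]; rfl
    rw [hpart2]
    congr 1
    rw [auxBlockEntry Quu K (Cm * Vxx * Cmᵀ + Vvv) i a (⟨i, b⟩ : (j : Fin N) × Fin (p j))]
    rw [Matrix.sum_apply]
    refine Finset.sum_congr rfl fun j _ => ?_
    have hXentry : ∀ b' : Fin (p j),
        (Cm * Vxx * Cmᵀ + Vvv) ⟨j, b'⟩ ⟨i, b⟩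
          = (Cb j * Vxx * (Cb i)ᵀ + Vvv.submatrix (Sigma.mk j) (Sigma.mk i)) b' b := by
      intro b'
      simp [Matrix.mul_apply, hCm]; rfl
    simp only [Matrix.mul_apply, Matrix.submatrix_apply, id_eq]
    simp only [hXentry]
    simp only [Finset.mul_sum, Finset.sum_mul]
    rw [Finset.sum_comm]
    exact Finset.sum_congr rfl fun b' _ => Finset.sum_congr rfl fun a' _ => by ring
  -- final assembly
  constructor
  · intro hstat i
    have hzero : ∀ (a : Fin (m i)) (b : Fin (p i)), Gm ⟨i, a⟩ ⟨i, b⟩ = 0 := by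
      intro a b
      have h := hstat (Pi.single (M := fun i => Matrix (Fin (m i)) (Fin (p i)) ℝ) i
        (Matrix.single a b (1 : ℝ)))
      rw [hderiv, auxSingle Gm i a b] at h
      linarith
    ext a b
    have h0 := hzero a b
    rw [hGb i a b, Matrix.add_apply] at h0
    simp only [Matrix.neg_apply]
    linarith
  · intro heq D'
    rw [hderiv D']
    have hz0 : ∀ (i : Fin N) (a : Fin (m i)) (b : Fin (p i)), Gm ⟨i, a⟩ ⟨i, b⟩ = 0 := by
      intro i a b
      rw [hGb i a b, Matrix.add_apply]
      have h1 := congrFun (congrFun (heq i) a) b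
      simp only [Matrix.neg_apply] at h1
      linarith
    simp [hz0]
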